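/- There exists a constant C > 0 such that for every continuously differentiable function v : ℝ → ℝ with v and v' square integrable on ℝ and v(x) → 0 as x → ±∞, the second KdV invariant I(v) = ∫_ℝ ( v'(x)² − v(x)³/3 ) dx satisfies (2/3)‖v'‖_{L²(ℝ)}² − C‖v‖_{L²(ℝ)}^{10/3} ≤ I(v) ≤ (4/3)‖v'‖_{L²(ℝ)}² + C‖v‖_{L²(ℝ)}^{10/3}. -/

import Mathlib

open MeasureTheory Filter

lemma young_aux {N D : ℝ} (hN : 0 ≤ N) (hD : 0 ≤ D) :
    Real.sqrt (2 * Real.sqrt N * Real.sqrt D) * N ≤ D + 2 * N ^ ((5:ℝ)/3) := by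
  have hN53 : (0:ℝ) ≤ N ^ ((5:ℝ)/3) := Real.rpow_nonneg hN _
  rcases eq_or_lt_of_le hN with h0 | hN'
  · rw [← h0]; simpa using by positivity
  have hNN : N ^ ((1:ℝ)/4) * N = N ^ ((5:ℝ)/4) := by
    rw [show (5:ℝ)/4 = 1/4 + 1 by norm_num, Real.rpow_add_one hN'.ne']
  have heq : Real.sqrt (2 * Real.sqrt N * Real.sqrt D) * N
      = (4*D) ^ ((1:ℝ)/4) * (N ^ ((5:ℝ)/3)) ^ ((3:ℝ)/4) := by
    rw [Real.sqrt_eq_rpow, Real.sqrt_eq_rpow, Real.sqrt_eq_rpow,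
      Real.mul_rpow (by positivity) (by positivity),
      Real.mul_rpow (by norm_num) (by positivity),
      Real.mul_rpow (by norm_num) hD,
      ← Real.rpow_mul hN, ← Real.rpow_mul hD, ← Real.rpow_mul hN,
      show (4:ℝ)^((1:ℝ)/4) = 2^((1:ℝ)/2) by
        rw [show (4:ℝ) = 2^(2:ℕ) by norm_num, ← Real.rpow_natCast,
          ← Real.rpow_mul (by norm_num : (0:ℝ) ≤ 2)]; norm_num]
    norm_num
    rw [← hNN]
    ring
  rw [heq]
  have key := Real.geom_mean_le_arith_mean2_weighted
    (by norm_num : (0:ℝ) ≤ 1/4) (by norm_num : (0:ℝ) ≤ 3/4)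
    (by positivity : (0:ℝ) ≤ 4*D) hN53 (by norm_num)
  linarith

theorem kdv_second_invariant_bounds :
    ∃ C : ℝ, 0 < C ∧
      ∀ v : ℝ → ℝ, ContDiff ℝ 1 v →
        Integrable (fun x => (v x) ^ 2) →
        Integrable (fun x => (deriv v x) ^ 2) →
        Tendsto v atTop (nhds 0) → Tendsto v atBot (nhds 0) →
        (2 / 3) * (Real.sqrt (∫ x, (deriv v x) ^ 2)) ^ 2
            - C * (Real.sqrt (∫ x, (v x) ^ 2)) ^ ((10 : ℝ) / 3)
          ≤ ∫ x, ((deriv v x) ^ 2 - (v x) ^ 3 / 3) ∧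
        ∫ x, ((deriv v x) ^ 2 - (v x) ^ 3 / 3)
          ≤ (4 / 3) * (Real.sqrt (∫ x, (deriv v x) ^ 2)) ^ 2
            + C * (Real.sqrt (∫ x, (v x) ^ 2)) ^ ((10 : ℝ) / 3) := by
  refine ⟨1, one_pos, fun v hv hv2 hd2 htop hbot => ?_⟩
  have hvc : Continuous v := hv.continuous
  have hdc : Continuous (deriv v) := hv.continuous_deriv le_rfl
  set N := ∫ x, (v x) ^ 2 with hNdef
  set D := ∫ x, (deriv v x) ^ 2 with hDdef
  have hN0 : 0 ≤ N := integral_nonneg fun x => sq_nonneg _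
  have hD0 : 0 ≤ D := integral_nonneg fun x => sq_nonneg _
  -- L² memberships
  have hmv : MemLp v 2 (volume : Measure ℝ) :=
    (memLp_two_iff_integrable_sq hvc.aestronglyMeasurable).2 hv2
  have hmd : MemLp (deriv v) 2 (volume : Measure ℝ) :=
    (memLp_two_iff_integrable_sq hdc.aestronglyMeasurable).2 hd2
  -- Cauchy–Schwarz
  have hCS : ∫ x, |v x| * |deriv v x| ≤ Real.sqrt N * Real.sqrt D := by
    have h := integral_mul_le_Lp_mul_Lq_of_nonneg (μ := (volume : Measure ℝ))
      (Real.holderConjugate_iff_eq_conjExponent (by norm_num : (1:ℝ) < 2) |>.2 (by norm_num))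
      (ae_of_all _ fun x => abs_nonneg (v x)) (ae_of_all _ fun x => abs_nonneg (deriv v x))
      (show MemLp (fun x => |v x|) (ENNReal.ofReal 2) volume by
        rw [show ENNReal.ofReal (2:ℝ) = 2 by norm_num [ENNReal.ofReal_ofNat]]; exact hmv.abs)
      (show MemLp (fun x => |deriv v x|) (ENNReal.ofReal 2) volume by
        rw [show ENNReal.ofReal (2:ℝ) = 2 by norm_num [ENNReal.ofReal_ofNat]]; exact hmd.abs)
    have habs2 : ∀ a : ℝ, |a| ^ (2:ℝ) = a ^ 2 := fun a => by
      rw [show (2:ℝ) = ((2:ℕ):ℝ) by norm_num, Real.rpow_natCast, sq_abs]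
    rw [hNdef, hDdef, Real.sqrt_eq_rpow, Real.sqrt_eq_rpow]
    simpa [habs2, one_div] using h
  -- integrability of 2 v v'
  have hb : ∀ x : ℝ, 2 * |v x| * |deriv v x| ≤ v x ^ 2 + deriv v x ^ 2 := fun x => by
    nlinarith [sq_nonneg (|v x| - |deriv v x|), sq_abs (v x), sq_abs (deriv v x)]
  have hint2 : Integrable (fun x => 2 * v x * deriv v x) := by
    refine (hv2.add hd2).mono' (((continuous_const.mul hvc).mul hdc).aestronglyMeasurable)
      (ae_of_all _ fun x => ?_)
    have : |2 * v x * deriv v x| = 2 * |v x| * |deriv v x| := by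
      rw [abs_mul, abs_mul]; simp
    simp only [Pi.add_apply, Real.norm_eq_abs, this]
    exact hb x
  have hintabs : Integrable (fun x => |v x| * |deriv v x|) := by
    refine (hv2.add hd2).mono' ((hvc.abs.mul hdc.abs).aestronglyMeasurable)
      (ae_of_all _ fun x => ?_)
    have h := hb x
    have h2 : (0:ℝ) ≤ |v x| * |deriv v x| := by positivity
    simp only [Pi.add_apply, Real.norm_eq_abs, abs_of_nonneg h2]
    linarith
  -- FTC : v x ^ 2 = ∫_{Iic x} 2 v v'
  have hderivAt : ∀ x, HasDerivAt (fun y => v y ^ 2) (2 * v x * deriv v x) x := by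
    intro x
    have h := (hv.differentiable one_ne_zero x).hasDerivAt
    exact (h.fun_pow 2).congr_deriv (by push_cast; ring)
  have hbot2 : Tendsto (fun x => v x ^ 2) atBot (nhds 0) := by
    have := hbot.mul hbot
    simpa [sq] using this
  have hftc : ∀ x, v x ^ 2 = ∫ t in Set.Iic x, 2 * v t * deriv v t := by
    intro x
    have h := integral_Iic_of_hasDerivAt_of_tendsto
      (f := fun y => v y ^ 2) (f' := fun y => 2 * v y * deriv v y) (a := x) (m := 0)
      ((hvc.pow 2).continuousWithinAt) (fun y _ => hderivAt y)
      hint2.integrableOn hbot2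
    simpa using h.symm
  -- uniform bound
  have hsup : ∀ x, v x ^ 2 ≤ 2 * Real.sqrt N * Real.sqrt D := by
    intro x
    rw [hftc x]
    have h1 : ∫ t in Set.Iic x, 2 * v t * deriv v t
        ≤ ∫ t in Set.Iic x, 2 * (|v t| * |deriv v t|) := by
      refine setIntegral_mono hint2.integrableOn (hintabs.const_mul 2).integrableOn fun t => ?_
      calc 2 * v t * deriv v t ≤ |2 * v t * deriv v t| := le_abs_self _
        _ = 2 * (|v t| * |deriv v t|) := by rw [abs_mul, abs_mul]; simp; ring
    have h2 : ∫ t in Set.Iic x, 2 * (|v t| * |deriv v t|)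
        ≤ ∫ t, 2 * (|v t| * |deriv v t|) :=
      setIntegral_le_integral (hintabs.const_mul 2)
        (ae_of_all _ fun t => by positivity)
    have h3 : ∫ t, 2 * (|v t| * |deriv v t|) = 2 * ∫ t, |v t| * |deriv v t| :=
      integral_const_mul 2 _
    calc ∫ t in Set.Iic x, 2 * v t * deriv v t
        ≤ 2 * ∫ t, |v t| * |deriv v t| := by rw [← h3]; exact h1.trans h2
      _ ≤ 2 * (Real.sqrt N * Real.sqrt D) := by linarith [hCS]
      _ = 2 * Real.sqrt N * Real.sqrt D := by ring
  set K := Real.sqrt (2 * Real.sqrt N * Real.sqrt D) with hKdef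
  have hK0 : 0 ≤ K := Real.sqrt_nonneg _
  have habsK : ∀ x, |v x| ≤ K := fun x => by
    rw [← Real.sqrt_sq_eq_abs]
    exact Real.sqrt_le_sqrt (hsup x)
  -- integrability of v^3
  have hcube : ∀ x : ℝ, |v x ^ 3| ≤ K * v x ^ 2 := fun x => by
    rw [abs_pow]
    calc |v x| ^ 3 = |v x| * |v x| ^ 2 := by ring
      _ ≤ K * |v x| ^ 2 := by
          apply mul_le_mul_of_nonneg_right (habsK x) (by positivity)
      _ = K * v x ^ 2 := by rw [sq_abs]
  have hi3 : Integrable (fun x => v x ^ 3) := by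
    refine (hv2.const_mul K).mono' ((hvc.pow 3).aestronglyMeasurable)
      (ae_of_all _ fun x => ?_)
    simpa [Real.norm_eq_abs] using hcube x
  -- bound on ∫ v^3
  have hi3abs : Integrable (fun x => |v x| ^ 3) := by
    have := hi3.abs
    simpa [← pow_abs] using this
  have hcube3 : ∀ x : ℝ, |v x| ^ 3 ≤ K * v x ^ 2 := fun x => by
    rw [pow_abs]; exact hcube x
  have h3 : |∫ x, v x ^ 3| ≤ K * N := by
    calc |∫ x, v x ^ 3| ≤ ∫ x, |v x ^ 3| := by
          have h := norm_integral_le_integral_norm (μ := volume) (fun x => v x ^ 3)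
          simp only [Real.norm_eq_abs] at h
          exact h
      _ = ∫ x, |v x| ^ 3 :=
          integral_congr_ae (ae_of_all _ fun x => (pow_abs (v x) 3).symm)
      _ ≤ ∫ x, K * v x ^ 2 := integral_mono hi3abs (hv2.const_mul K) hcube3
      _ = K * N := integral_const_mul K _
  have hyoung : K * N ≤ D + 2 * N ^ ((5:ℝ)/3) := young_aux hN0 hD0
  -- assemble
  have hsplit : ∫ x, (deriv v x ^ 2 - v x ^ 3 / 3) = D - (∫ x, v x ^ 3) / 3 := by
    rw [integral_sub hd2 (hi3.div_const 3), integral_div]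
  have hS : (Real.sqrt N) ^ ((10:ℝ)/3) = N ^ ((5:ℝ)/3) := by
    rw [Real.sqrt_eq_rpow, ← Real.rpow_mul hN0]; norm_num
  have hsq : (Real.sqrt D) ^ 2 = D := Real.sq_sqrt hD0
  have hN53 : (0:ℝ) ≤ N ^ ((5:ℝ)/3) := Real.rpow_nonneg hN0 _
  have habs := abs_le.1 h3
  constructor
  · rw [hsplit, hsq, hS]; linarith [habs.2]
  · rw [hsplit, hsq, hS]; linarith [habs.1]
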